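/- arXiv:2206.04378 — 3 statements merged into one kernel-verified Lean document; each statement's English description precedes it below -/
import Mathlib

section
/- For k ≥ 2, I(s) = e^{(s/2)(1-1/k)}, and the scaled Hermite polynomials H_m(y,s) = I(s)^{-m} h_m(I(s)y), the operator L_s q = I(s)^{-2} Δq − (1/(2k)) y q' + q satisfies L_s H_m(·,s) = (1 − m/(2k)) H_m(·,s) + m(m−1)(1 − 1/k) I(s)^{-2} H_{m-2}(·,s) for m ≥ 2, and L_s H_m(·,s) = (1 − m/(2k)) H_m(·,s) for m ∈ {0,1}. -/
open MeasureTheory Real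

/-- Physicists' Hermite polynomial `h_m(z) = ∑_{ℓ=0}^{[m/2]} m!/(ℓ!(m-2ℓ)!) (-1)^ℓ z^{m-2ℓ}`. -/
noncomputable def hPoly (m : ℕ) (z : ℝ) : ℝ :=
  ∑ ℓ ∈ Finset.range (m / 2 + 1),
    ((Nat.factorial m : ℝ) / ((Nat.factorial ℓ : ℝ) * (Nat.factorial (m - 2 * ℓ) : ℝ))) *
      (-1 : ℝ) ^ ℓ * z ^ (m - 2 * ℓ)

/-- `I(s) = e^{(s/2)(1-1/k)}`. -/
noncomputable def Ifun (k : ℕ) (s : ℝ) : ℝ := Real.exp (s / 2 * (1 - 1 / (k : ℝ)))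

/-- Scaled Hermite polynomial `H_m(y,s) = I(s)^{-m} h_m(I(s) y)`. -/
noncomputable def Hscaled (k : ℕ) (m : ℕ) (y s : ℝ) : ℝ :=
  (Ifun k s) ^ (-(m : ℤ)) * hPoly m (Ifun k s * y)

/-- Gaussian weight `ρ_s(y) = (I(s)/√(4π)) e^{-I(s)² y²/4}`. -/
noncomputable def rhoS (k : ℕ) (s y : ℝ) : ℝ :=
  Ifun k s / Real.sqrt (4 * Real.pi) * Real.exp (-(Ifun k s) ^ 2 * y ^ 2 / 4)

/-- Mehler-type kernel `K_{sσ}(y,z)` with `L = I(σ)/√(1-e^{-(s-σ)})`. -/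
noncomputable def mehlerK (k : ℕ) (s σ y z : ℝ) : ℝ :=
  Real.exp (s - σ) *
    (Ifun k σ / Real.sqrt (1 - Real.exp (-(s - σ))) / Real.sqrt (4 * Real.pi)) *
    Real.exp (-((Ifun k σ / Real.sqrt (1 - Real.exp (-(s - σ)))) ^ 2 *
      (Real.exp (-(s - σ) / (2 * (k : ℝ))) * y - z) ^ 2) / 4)

/- ### auxiliary machinery -/

noncomputable def cc (m ℓ : ℕ) : ℝ :=
  ((Nat.factorial m : ℝ) / ((Nat.factorial ℓ : ℝ) * (Nat.factorial (m - 2 * ℓ) : ℝ))) * (-1:ℝ)^ℓ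

lemma hPoly_eq (m : ℕ) (z : ℝ) :
    hPoly m z = ∑ ℓ ∈ Finset.range (m/2+1), cc m ℓ * z ^ (m - 2*ℓ) := rfl

lemma ccE (ℓ n : ℕ) :
    cc (n + 2*ℓ + 2) ℓ * ((n:ℝ)+2) * ((n:ℝ)+1)
      = ((n:ℝ)+2*ℓ+2) * ((n:ℝ)+2*ℓ+1) * cc (n + 2*ℓ) ℓ := by
  have h1 : n + 2*ℓ + 2 - 2*ℓ = n + 2 := by omega
  have h2 : n + 2*ℓ - 2*ℓ = n := by omega
  simp only [cc, h1, h2]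
  rw [show n + 2*ℓ + 2 = (n + 2*ℓ + 1) + 1 by ring, Nat.factorial_succ,
    show n + 2*ℓ + 1 = (n + 2*ℓ) + 1 by ring, Nat.factorial_succ,
    show n + 2 = (n+1)+1 by ring, Nat.factorial_succ, Nat.factorial_succ]
  have f1 : (Nat.factorial ℓ : ℝ) ≠ 0 := Nat.cast_ne_zero.mpr (Nat.factorial_ne_zero ℓ)
  have f2 : (Nat.factorial n : ℝ) ≠ 0 := Nat.cast_ne_zero.mpr (Nat.factorial_ne_zero n)
  field_simp
  push_cast
  ring

lemma ccF (ℓ n : ℕ) :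
    cc (n + 2*ℓ + 2) (ℓ+1) * (-(2*((ℓ:ℝ)+1)))
      = 2 * ((n:ℝ)+2*ℓ+2) * ((n:ℝ)+2*ℓ+1) * cc (n + 2*ℓ) ℓ := by
  have h1 : n + 2*ℓ + 2 - 2*(ℓ+1) = n := by omega
  have h2 : n + 2*ℓ - 2*ℓ = n := by omega
  simp only [cc, h1, h2]
  rw [show n + 2*ℓ + 2 = (n + 2*ℓ + 1) + 1 by ring, Nat.factorial_succ,
    show n + 2*ℓ + 1 = (n + 2*ℓ) + 1 by ring, Nat.factorial_succ, Nat.factorial_succ]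
  have f1 : (Nat.factorial ℓ : ℝ) ≠ 0 := Nat.cast_ne_zero.mpr (Nat.factorial_ne_zero ℓ)
  have f2 : (Nat.factorial n : ℝ) ≠ 0 := Nat.cast_ne_zero.mpr (Nat.factorial_ne_zero n)
  field_simp
  push_cast
  ring

noncomputable def D1 (m : ℕ) (z : ℝ) : ℝ :=
  ∑ ℓ ∈ Finset.range (m/2+1), cc m ℓ * ((m - 2*ℓ : ℕ) : ℝ) * z ^ (m - 2*ℓ - 1)

noncomputable def D2 (m : ℕ) (z : ℝ) : ℝ :=
  ∑ ℓ ∈ Finset.range (m/2+1),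
    cc m ℓ * ((m - 2*ℓ : ℕ) : ℝ) * ((m - 2*ℓ - 1 : ℕ) : ℝ) * z ^ (m - 2*ℓ - 1 - 1)

lemma sumE (m : ℕ) (hm : 2 ≤ m) (z : ℝ) :
    D2 m z = (m:ℝ) * ((m:ℝ) - 1) * hPoly (m-2) z := by
  simp only [D2]
  rw [Finset.sum_range_succ]
  have hlast : ((m - 2*(m/2) : ℕ) : ℝ) * ((m - 2*(m/2) - 1 : ℕ) : ℝ) = 0 := by
    have h : m - 2*(m/2) = 0 ∨ m - 2*(m/2) - 1 = 0 := by omega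
    rcases h with h | h <;> rw [h] <;> simp
  have hrange : (m-2)/2 + 1 = m/2 := by omega
  rw [hPoly_eq, hrange, Finset.mul_sum]
  have hz : cc m (m/2) * ((m - 2*(m/2) : ℕ) : ℝ) * ((m - 2*(m/2) - 1 : ℕ) : ℝ) * z ^ (m - 2*(m/2) - 1 - 1)
      = 0 := by
    rw [mul_assoc (cc m (m/2)), hlast]; ring
  rw [hz, add_zero]
  apply Finset.sum_congr rfl
  intro ℓ hℓ
  have hℓ' : ℓ < m/2 := Finset.mem_range.mp hℓ
  set n := m - 2*ℓ - 2 with hn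
  have e5 : m = n + 2*ℓ + 2 := by omega
  have e1 : m - 2*ℓ = n + 2 := by omega
  have e2 : m - 2*ℓ - 1 = n + 1 := by omega
  have e3 : m - 2*ℓ - 1 - 1 = n := by omega
  have e4 : m - 2 - 2*ℓ = n := by omega
  have e6 : m - 2 = n + 2*ℓ := by omega
  rw [e3, e2, e1, e4, e6, e5]
  push_cast
  linear_combination z^n * ccE ℓ n

lemma sumF (m : ℕ) (hm : 2 ≤ m) (z : ℝ) :
    z * D1 m z = (m:ℝ) * hPoly m z + 2 * (m:ℝ) * ((m:ℝ) - 1) * hPoly (m-2) z := by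
  simp only [D1]
  have step1 : z * (∑ ℓ ∈ Finset.range (m/2+1), cc m ℓ * ((m - 2*ℓ : ℕ) : ℝ) * z ^ (m - 2*ℓ - 1))
      = ∑ ℓ ∈ Finset.range (m/2+1), cc m ℓ * ((m - 2*ℓ : ℕ) : ℝ) * z ^ (m - 2*ℓ) := by
    rw [Finset.mul_sum]
    apply Finset.sum_congr rfl
    intro ℓ _
    by_cases h : m - 2*ℓ = 0
    · simp [h]
    · have h1 : m - 2*ℓ - 1 + 1 = m - 2*ℓ := by omega
      have h2 : z ^ (m - 2*ℓ) = z ^ (m - 2*ℓ - 1) * z := by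
        conv_lhs => rw [← h1, pow_succ]
      rw [h2]; ring
  rw [step1]
  have step2 : ∀ ℓ ∈ Finset.range (m/2+1),
      cc m ℓ * ((m - 2*ℓ : ℕ) : ℝ) * z ^ (m - 2*ℓ)
        = (m:ℝ) * (cc m ℓ * z ^ (m - 2*ℓ))
          + cc m ℓ * (((m - 2*ℓ : ℕ) : ℝ) - (m:ℝ)) * z ^ (m - 2*ℓ) := by
    intro ℓ _; ring
  rw [Finset.sum_congr rfl step2, Finset.sum_add_distrib, ← Finset.mul_sum, ← hPoly_eq]
  congr 1
  rw [Finset.sum_range_succ']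
  have h0 : cc m 0 * (((m - 2*0 : ℕ) : ℝ) - (m:ℝ)) * z ^ (m - 2*0) = 0 := by norm_num
  rw [h0, add_zero]
  have hrange : (m-2)/2 + 1 = m/2 := by omega
  rw [hPoly_eq, hrange, Finset.mul_sum]
  apply Finset.sum_congr rfl
  intro ℓ hℓ
  have hℓ' : ℓ < m/2 := Finset.mem_range.mp hℓ
  set n := m - 2*ℓ - 2 with hn
  have e5 : m = n + 2*ℓ + 2 := by omega
  have e1 : m - 2*(ℓ+1) = n := by omega
  have e4 : m - 2 - 2*ℓ = n := by omega
  have e6 : m - 2 = n + 2*ℓ := by omega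
  rw [e1, e4, e6, e5]
  push_cast
  linear_combination z^n * ccF ℓ n

lemma hasDerivAt_monsum (N : ℕ) (b : ℕ → ℝ) (e : ℕ → ℕ) (z : ℝ) :
    HasDerivAt (fun z : ℝ => ∑ ℓ ∈ Finset.range N, b ℓ * z ^ (e ℓ))
      (∑ ℓ ∈ Finset.range N, b ℓ * ((e ℓ : ℝ)) * z ^ (e ℓ - 1)) z := by
  apply HasDerivAt.fun_sum
  intro i _
  simpa [mul_assoc] using (hasDerivAt_pow (e i) z).const_mul (b i)

lemma hP_deriv (m : ℕ) (z : ℝ) : HasDerivAt (fun z => hPoly m z) (D1 m z) z :=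
  hasDerivAt_monsum _ _ _ z

lemma D1_deriv (m : ℕ) (z : ℝ) : HasDerivAt (fun z => D1 m z) (D2 m z) z :=
  hasDerivAt_monsum (m/2+1) (fun ℓ => cc m ℓ * ((m - 2*ℓ : ℕ) : ℝ)) (fun ℓ => m - 2*ℓ - 1) z

lemma Hs_deriv1 (k : ℕ) (s : ℝ) (m : ℕ) (x : ℝ) :
    HasDerivAt (fun x => Hscaled k m x s)
      ((Ifun k s) ^ (-(m : ℤ)) * (D1 m (Ifun k s * x) * Ifun k s)) x := by
  have hin : HasDerivAt (fun x : ℝ => Ifun k s * x) (Ifun k s) x := by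
    simpa using (hasDerivAt_id x).const_mul (Ifun k s)
  exact ((hP_deriv m (Ifun k s * x)).comp x hin).const_mul _

lemma Hs_deriv_eq (k : ℕ) (s : ℝ) (m : ℕ) :
    deriv (fun x => Hscaled k m x s)
      = fun x => ((Ifun k s) ^ (-(m : ℤ)) * Ifun k s) * D1 m (Ifun k s * x) := by
  funext x
  rw [(Hs_deriv1 k s m x).deriv]
  ring

lemma Hs_deriv2 (k : ℕ) (s : ℝ) (m : ℕ) (y : ℝ) :
    deriv (deriv (fun x => Hscaled k m x s)) y
      = ((Ifun k s) ^ (-(m : ℤ)) * Ifun k s * Ifun k s) * D2 m (Ifun k s * y) := by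
  rw [Hs_deriv_eq]
  have hin : HasDerivAt (fun x : ℝ => Ifun k s * x) (Ifun k s) y := by
    simpa using (hasDerivAt_id y).const_mul (Ifun k s)
  have hcomp : HasDerivAt (fun x => D1 m (Ifun k s * x)) (D2 m (Ifun k s * y) * Ifun k s) y :=
    (D1_deriv m (Ifun k s * y)).comp y hin
  have h2 := (hcomp.const_mul ((Ifun k s) ^ (-(m : ℤ)) * Ifun k s)).deriv
  rw [h2]
  ring

lemma finalg (I K y A B d1 d2 M P : ℝ) (hI : I ≠ 0) (hP : P ≠ 0) (hK : K ≠ 0)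
    (hE : d2 = M*(M-1)*B) (hF : (I*y)*d1 = M*A + 2*M*(M-1)*B) :
    (I*I)⁻¹ * ((P*I*I)⁻¹ * I * I * d2) - y/(2*K) * ((P*I*I)⁻¹ * I * d1) + (P*I*I)⁻¹ * A
      = (1 - M/(2*K)) * ((P*I*I)⁻¹ * A) + M*(M-1)*(1-1/K) * (I*I)⁻¹ * (P⁻¹ * B) := by
  rw [hE]
  field_simp
  ring_nf
  linear_combination (-1) * hF

theorem Ls_on_Hscaled (k : ℕ) (hk : 2 ≤ k) (s : ℝ) (m : ℕ) (y : ℝ) :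
    (2 ≤ m →
      (Ifun k s) ^ (-2 : ℤ) * deriv (deriv (fun x => Hscaled k m x s)) y
          - y / (2 * (k : ℝ)) * deriv (fun x => Hscaled k m x s) y + Hscaled k m y s
        = (1 - (m : ℝ) / (2 * (k : ℝ))) * Hscaled k m y s
          + (m : ℝ) * ((m : ℝ) - 1) * (1 - 1 / (k : ℝ)) * (Ifun k s) ^ (-2 : ℤ)
            * Hscaled k (m - 2) y s)
    ∧ (m ≤ 1 →
      (Ifun k s) ^ (-2 : ℤ) * deriv (deriv (fun x => Hscaled k m x s)) y
          - y / (2 * (k : ℝ)) * deriv (fun x => Hscaled k m x s) y + Hscaled k m y s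
        = (1 - (m : ℝ) / (2 * (k : ℝ))) * Hscaled k m y s) := by
  have hI : Ifun k s ≠ 0 := (Real.exp_pos _).ne'
  have hK : (k : ℝ) ≠ 0 := by positivity
  constructor
  · intro hm
    have hP : (Ifun k s) ^ (m-2) ≠ 0 := pow_ne_zero _ hI
    have hIm : (Ifun k s) ^ (-(m : ℤ)) = ((Ifun k s)^(m-2) * Ifun k s * Ifun k s)⁻¹ := by
      rw [zpow_neg, zpow_natCast]
      congr 1
      conv_lhs => rw [show m = (m-2)+2 from by omega]
      rw [pow_add]; ring
    have hI2 : (Ifun k s) ^ (-2 : ℤ) = (Ifun k s * Ifun k s)⁻¹ := by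
      rw [zpow_neg, zpow_two]
    have hIm2 : (Ifun k s) ^ (-((m-2 : ℕ) : ℤ)) = ((Ifun k s)^(m-2))⁻¹ := by
      rw [zpow_neg, zpow_natCast]
    rw [Hs_deriv2 k s m y, congrFun (Hs_deriv_eq k s m) y]
    simp only [Hscaled, hIm, hI2, hIm2]
    exact finalg (Ifun k s) (k : ℝ) y (hPoly m (Ifun k s * y)) (hPoly (m-2) (Ifun k s * y))
      (D1 m (Ifun k s * y)) (D2 m (Ifun k s * y)) (m : ℝ) ((Ifun k s)^(m-2))
      hI hP hK (sumE m hm _) (sumF m hm _)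
  · intro hm
    interval_cases m
    · have h0 : (fun x => Hscaled k 0 x s) = fun _ => (1:ℝ) := by
        funext x; simp [Hscaled, hPoly]
      rw [h0]
      simp [Hscaled, hPoly, deriv_const]
    · have h1 : (fun x => Hscaled k 1 x s) = fun x => x := by
        funext x
        simp only [Hscaled, hPoly]
        simp [zpow_neg]
        field_simp
      rw [h1]
      have : deriv (fun x : ℝ => x) = fun _ => (1:ℝ) := by
        funext x; simp
      rw [this]
      have hH : Hscaled k 1 y s = y := by
        simp only [Hscaled, hPoly]
        simp [zpow_neg]
        field_simp
      rw [hH]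
      simp [deriv_const]
      field_simp
      ring
end

section
/- Let K > 0, m ∈ ℕ, and let f : ℝ → ℝ satisfy |f(y)| ≤ C_f (1 + |y|^K) for all y. Then there exist constants C (depending on m, K, C_f) and s₀ such that for all s ≥ s₀, |∫_{|y| ≥ 1} f(y) H_m(y,s) ρ_s(y) dy| ≤ C e^{-I(s)/8}, where ρ_s(y) = (I(s)/√(4π)) e^{-I(s)² y²/4}, H_m(y,s) = I(s)^{-m} h_m(I(s)y), and I(s) = e^{(s/2)(1-1/k)} with k ≥ 2. -/
open MeasureTheory Real

set_option maxHeartbeats 1000000 in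
lemma int_exp_abs (c : ℝ) : Integrable (fun y : ℝ => Real.exp (c * |y| - y ^ 2 / 8)) := by
  have hb : (0:ℝ) < 1/8 := by norm_num
  have h1 : Integrable (fun y : ℝ => Real.exp (2 * c ^ 2) * Real.exp (-(1/8) * (y - 4 * c) ^ 2)) :=
    ((integrable_exp_neg_mul_sq hb).comp_sub_right (4 * c)).const_mul _
  have h2 : Integrable (fun y : ℝ => Real.exp (2 * c ^ 2) * Real.exp (-(1/8) * (y - (-4 * c)) ^ 2)) :=
    ((integrable_exp_neg_mul_sq hb).comp_sub_right (-4 * c)).const_mul _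
  refine (h1.add h2).mono ?_ (ae_of_all _ fun y => ?_)
  · exact (Continuous.rexp (by continuity)).aestronglyMeasurable
  · rw [Real.norm_eq_abs, abs_of_nonneg (Real.exp_pos _).le, Real.norm_eq_abs]
    have e1 : Real.exp (c * y - y ^ 2 / 8) = Real.exp (2 * c ^ 2) * Real.exp (-(1/8) * (y - 4 * c) ^ 2) := by
      rw [← Real.exp_add]; ring_nf
    have e2 : Real.exp (-(c * y) - y ^ 2 / 8) = Real.exp (2 * c ^ 2) * Real.exp (-(1/8) * (y - (-4 * c)) ^ 2) := by
      rw [← Real.exp_add]; ring_nf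
    have habs : c * |y| ≤ c * y ∨ c * |y| ≤ -(c * y) := by
      rcases abs_choice y with h | h
      · left; rw [h]
      · right; rw [h]; ring_nf; exact le_refl _
    have hpos : ∀ a b : ℝ, Real.exp a ≤ Real.exp b → Real.exp (a) ≤ Real.exp b := fun _ _ h => h
    have key : Real.exp (c * |y| - y ^ 2 / 8) ≤ Real.exp (c * y - y ^ 2 / 8) + Real.exp (-(c * y) - y ^ 2 / 8) := by
      rcases habs with h | h
      · exact le_add_of_le_of_nonneg (Real.exp_le_exp.mpr (by linarith)) (Real.exp_pos _).le
      · exact le_add_of_nonneg_of_le (Real.exp_pos _).le (Real.exp_le_exp.mpr (by linarith))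
    calc Real.exp (c * |y| - y ^ 2 / 8) ≤ _ := key
      _ = _ := by rw [e1, e2]
      _ ≤ |Real.exp (2*c^2) * Real.exp (-(1/8)*(y-4*c)^2) + Real.exp (2*c^2) * Real.exp (-(1/8)*(y-(-4*c))^2)| := le_abs_self _

set_option maxHeartbeats 1000000 in
theorem outer_integral_exponentially_small (k : ℕ) (hk : 2 ≤ k) (m : ℕ) (K : ℝ) (hK : 0 < K)
    (f : ℝ → ℝ) (Cf : ℝ) (hf : ∀ y : ℝ, |f y| ≤ Cf * (1 + |y| ^ K)) :
    ∃ C s₀ : ℝ, ∀ s : ℝ, s₀ ≤ s →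
      |∫ y in {y : ℝ | 1 ≤ |y|}, f y * Hscaled k m y s * rhoS k s y|
        ≤ C * Real.exp (-Ifun k s / 8) := by
  have hCf : 0 ≤ Cf := by
    have := hf 0
    rw [abs_zero, Real.zero_rpow hK.ne', add_zero, mul_one] at this
    exact le_trans (abs_nonneg _) this
  set Cm : ℝ := ∑ ℓ ∈ Finset.range (m / 2 + 1),
      ((Nat.factorial m : ℝ) / ((Nat.factorial ℓ : ℝ) * (Nat.factorial (m - 2 * ℓ) : ℝ))) with hCm_def
  have hCm : 0 ≤ Cm := Finset.sum_nonneg fun ℓ _ => by positivity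
  set A : ℝ := ∫ y : ℝ, Real.exp ((K + (m : ℝ)) * |y| - y ^ 2 / 8) with hA_def
  have hA : 0 ≤ A := integral_nonneg fun y => (Real.exp_pos _).le
  have hR : (0:ℝ) < Real.sqrt (4 * Real.pi) := Real.sqrt_pos.mpr (by positivity)
  refine ⟨2 * Cf * Cm / Real.sqrt (4 * Real.pi) * A, 60, fun s hs => ?_⟩
  have hC : 0 ≤ 2 * Cf * Cm / Real.sqrt (4 * Real.pi) * A := by positivity
  set I : ℝ := Ifun k s with hI_def
  have hIpos : 0 < I := Real.exp_pos _
  have hI16 : 16 ≤ I := by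
    have hk2 : (2:ℝ) ≤ (k:ℝ) := by exact_mod_cast hk
    have h1 : (1:ℝ) / (k:ℝ) ≤ 1/2 := by
      apply div_le_div_of_nonneg_left (by norm_num) (by linarith) hk2
    have h2 : s / 4 ≤ s / 2 * (1 - 1 / (k:ℝ)) := by nlinarith
    have h3 : s / 4 + 1 ≤ Real.exp (s/4) := Real.add_one_le_exp _
    have h4 : Real.exp (s/4) ≤ I := Real.exp_le_exp.mpr h2
    linarith
  have hI1 : 1 ≤ I := by linarith
  -- the dominating function
  set D : ℝ := 2 * Cf * Cm / Real.sqrt (4 * Real.pi) * Real.exp (-I / 8) with hD_def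
  have hD : 0 ≤ D := by positivity
  set G : ℝ → ℝ := fun y => D * Real.exp ((K + (m:ℝ)) * |y| - y ^ 2 / 8) with hG_def
  have hGint : Integrable G := (int_exp_abs _).const_mul D
  have hGnn : ∀ y, 0 ≤ G y := fun y => mul_nonneg hD (Real.exp_pos _).le
  -- pointwise bound on the set
  have key : ∀ y : ℝ, 1 ≤ |y| → ‖f y * Hscaled k m y s * rhoS k s y‖ ≤ G y := by
    intro y hy
    have hynn : (0:ℝ) ≤ |y| := abs_nonneg y
    have hy2 : 1 ≤ y ^ 2 := by nlinarith [sq_abs y]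
    have hrho_nn : 0 ≤ rhoS k s y := by
      unfold rhoS; rw [← hI_def]; positivity
    -- bound on Hscaled
    have hIy : 1 ≤ I * |y| := by nlinarith
    have hH : |Hscaled k m y s| ≤ Cm * |y| ^ m := by
      unfold Hscaled; rw [← hI_def]
      rw [abs_mul]
      have hz : |I ^ (-(m:ℤ))| = (I ^ m)⁻¹ := by
        rw [zpow_neg, zpow_natCast, abs_inv, abs_of_pos (pow_pos hIpos m)]
      rw [hz]
      have hpoly : |hPoly m (I * y)| ≤ Cm * (I * |y|) ^ m := by
        unfold hPoly
        calc |∑ ℓ ∈ Finset.range (m / 2 + 1),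
              ((Nat.factorial m : ℝ) / ((Nat.factorial ℓ : ℝ) * (Nat.factorial (m - 2 * ℓ) : ℝ))) *
                (-1 : ℝ) ^ ℓ * (I * y) ^ (m - 2 * ℓ)|
            ≤ ∑ ℓ ∈ Finset.range (m / 2 + 1),
              |((Nat.factorial m : ℝ) / ((Nat.factorial ℓ : ℝ) * (Nat.factorial (m - 2 * ℓ) : ℝ))) *
                (-1 : ℝ) ^ ℓ * (I * y) ^ (m - 2 * ℓ)| := Finset.abs_sum_le_sum_abs _ _
          _ ≤ ∑ ℓ ∈ Finset.range (m / 2 + 1),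
              ((Nat.factorial m : ℝ) / ((Nat.factorial ℓ : ℝ) * (Nat.factorial (m - 2 * ℓ) : ℝ))) *
                (I * |y|) ^ m := by
              apply Finset.sum_le_sum
              intro ℓ _
              rw [abs_mul, abs_mul, abs_pow, abs_pow, abs_neg, abs_one, one_pow, mul_one,
                abs_mul, abs_of_pos hIpos]
              have h1 : |(Nat.factorial m : ℝ) / ((Nat.factorial ℓ : ℝ) * (Nat.factorial (m - 2*ℓ) : ℝ))|
                  = (Nat.factorial m : ℝ) / ((Nat.factorial ℓ : ℝ) * (Nat.factorial (m - 2*ℓ) : ℝ)) := by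
                apply abs_of_nonneg; positivity
              rw [h1]
              apply mul_le_mul_of_nonneg_left _ (by positivity)
              exact pow_le_pow_right₀ hIy (Nat.sub_le m (2*ℓ))
          _ = Cm * (I * |y|) ^ m := by rw [hCm_def, Finset.sum_mul]
      calc (I ^ m)⁻¹ * |hPoly m (I * y)| ≤ (I ^ m)⁻¹ * (Cm * (I * |y|) ^ m) := by
            apply mul_le_mul_of_nonneg_left hpoly (by positivity)
        _ = Cm * |y| ^ m := by
            rw [mul_pow]
            field_simp
    -- bound on rhoS
    have hrho : rhoS k s y ≤ I / Real.sqrt (4 * Real.pi) *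
        (Real.exp (-I ^ 2 / 8) * Real.exp (-y ^ 2 / 8)) := by
      unfold rhoS; rw [← hI_def]
      apply mul_le_mul_of_nonneg_left _ (by positivity)
      rw [← Real.exp_add]
      apply Real.exp_le_exp.mpr
      have hI2 : 1 ≤ I ^ 2 := by nlinarith
      have h1 : I ^ 2 * 1 ≤ I ^ 2 * y ^ 2 := by nlinarith
      have h2 : 1 * y ^ 2 ≤ I ^ 2 * y ^ 2 := mul_le_mul_of_nonneg_right hI2 (sq_nonneg y)
      nlinarith
    -- exponential bounds
    have hE1 : |y| ^ K ≤ Real.exp (K * |y|) := by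
      have h1 : |y| ≤ Real.exp |y| := by
        have := Real.add_one_le_exp |y|; linarith
      calc |y| ^ K ≤ (Real.exp |y|) ^ K := Real.rpow_le_rpow hynn h1 hK.le
        _ = Real.exp (K * |y|) := by rw [← Real.exp_mul, mul_comm]
    have hE1' : (1:ℝ) ≤ Real.exp (K * |y|) := Real.one_le_exp (by positivity)
    have hE2 : |y| ^ m ≤ Real.exp ((m:ℝ) * |y|) := by
      have h1 : |y| ≤ Real.exp |y| := by
        have := Real.add_one_le_exp |y|; linarith
      calc |y| ^ m ≤ (Real.exp |y|) ^ m := pow_le_pow_left₀ hynn h1 m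
        _ = Real.exp ((m:ℝ) * |y|) := (Real.exp_nat_mul _ m).symm
    have hIe : I * Real.exp (-I ^ 2 / 8) ≤ Real.exp (-I / 8) := by
      have h1 : I ≤ Real.exp I := by
        have := Real.add_one_le_exp I; linarith
      calc I * Real.exp (-I ^ 2 / 8) ≤ Real.exp I * Real.exp (-I ^ 2 / 8) :=
            mul_le_mul_of_nonneg_right h1 (Real.exp_pos _).le
        _ = Real.exp (I + -I ^ 2 / 8) := (Real.exp_add _ _).symm
        _ ≤ Real.exp (-I / 8) := Real.exp_le_exp.mpr (by nlinarith)
    -- assemble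
    rw [Real.norm_eq_abs, abs_mul, abs_mul, abs_of_nonneg hrho_nn]
    calc |f y| * |Hscaled k m y s| * rhoS k s y
        ≤ (Cf * (1 + |y| ^ K)) * (Cm * |y| ^ m) *
          (I / Real.sqrt (4 * Real.pi) * (Real.exp (-I ^ 2 / 8) * Real.exp (-y ^ 2 / 8))) := by
          apply mul_le_mul (mul_le_mul (hf y) hH (abs_nonneg _)
            (by positivity)) hrho hrho_nn (by positivity)
      _ ≤ (Cf * (2 * Real.exp (K * |y|))) * (Cm * Real.exp ((m:ℝ) * |y|)) *
          (I / Real.sqrt (4 * Real.pi) * (Real.exp (-I ^ 2 / 8) * Real.exp (-y ^ 2 / 8))) := by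
          apply mul_le_mul_of_nonneg_right _ (by positivity)
          apply mul_le_mul _ (mul_le_mul_of_nonneg_left hE2 hCm) (by positivity) (by positivity)
          apply mul_le_mul_of_nonneg_left _ hCf
          have h := Real.rpow_nonneg hynn K
          linarith
      _ = (2 * Cf * Cm / Real.sqrt (4 * Real.pi)) * (I * Real.exp (-I ^ 2 / 8)) *
          (Real.exp (K * |y|) * Real.exp ((m:ℝ) * |y|) * Real.exp (-y ^ 2 / 8)) := by
          field_simp
      _ ≤ (2 * Cf * Cm / Real.sqrt (4 * Real.pi)) * Real.exp (-I / 8) *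
          (Real.exp (K * |y|) * Real.exp ((m:ℝ) * |y|) * Real.exp (-y ^ 2 / 8)) := by
          apply mul_le_mul_of_nonneg_right (mul_le_mul_of_nonneg_left hIe (by positivity))
            (by positivity)
      _ = G y := by
          rw [hG_def]
          simp only [hD_def]
          rw [show (K + (m:ℝ)) * |y| - y ^ 2 / 8 = K * |y| + ((m:ℝ) * |y| + (-y ^ 2 / 8)) by ring,
            Real.exp_add, Real.exp_add]
          ring
  -- combine
  have hSmeas : MeasurableSet {y : ℝ | 1 ≤ |y|} :=
    (isClosed_le continuous_const continuous_abs).measurableSet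
  by_cases hint : IntegrableOn (fun y => f y * Hscaled k m y s * rhoS k s y) {y : ℝ | 1 ≤ |y|}
  · calc |∫ y in {y : ℝ | 1 ≤ |y|}, f y * Hscaled k m y s * rhoS k s y|
        ≤ ∫ y in {y : ℝ | 1 ≤ |y|}, ‖f y * Hscaled k m y s * rhoS k s y‖ :=
          by rw [← Real.norm_eq_abs]; exact norm_integral_le_integral_norm _
      _ ≤ ∫ y in {y : ℝ | 1 ≤ |y|}, G y := by
          apply setIntegral_mono_on hint.norm hGint.integrableOn hSmeas
          intro y hy
          exact key y hy
      _ ≤ ∫ y : ℝ, G y := setIntegral_le_integral hGint (ae_of_all _ hGnn)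
      _ = D * A := by rw [hG_def, hA_def, integral_const_mul]
      _ ≤ 2 * Cf * Cm / Real.sqrt (4 * Real.pi) * A * Real.exp (-Ifun k s / 8) := by
          rw [hD_def, ← hI_def]; ring_nf; exact le_refl _
  · rw [integral_undef hint, abs_zero]
    exact mul_nonneg hC (Real.exp_pos _).le
end

section
/- Let k ≥ 2 and σ < s. Define the Mehler-type kernel K_{sσ}(y,z) = e^{s−σ} (L/√(4π)) exp(−L²(e^{-(s−σ)/(2k)} y − z)²/4) with L = L(s,σ) = I(σ)/√(1−e^{-(s−σ)}) and I(s) = e^{(s/2)(1−1/k)}. Then for every n ≥ 0, ∫_ℝ K_{sσ}(y,z) H_n(z,σ) dz = e^{(s−σ)(1−n/(2k))} H_n(y,s) for all y ∈ ℝ. -/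
set_option maxRecDepth 8000
set_option maxHeartbeats 1000000

open MeasureTheory Real

open Filter

lemma integrable_pow_gauss {b : ℝ} (hb : 0 < b) (n : ℕ) :
    Integrable fun x : ℝ => x ^ n * Real.exp (-b * x ^ 2) := by
  have h := integrable_rpow_mul_exp_neg_mul_sq hb (s := (n : ℝ))
    (by exact_mod_cast lt_of_lt_of_le (by norm_num : (-1:ℝ) < 0) (Nat.cast_nonneg n))
  simpa [Real.rpow_natCast] using h

lemma tendsto_pow_gauss_atTop {b : ℝ} (hb : 0 < b) (n : ℕ) :
    Tendsto (fun x : ℝ => x ^ n * Real.exp (-b * x ^ 2)) atTop (nhds 0) := by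
  have h := rpow_mul_exp_neg_mul_sq_isLittleO_exp_neg hb (n : ℝ)
  simp_rw [Real.rpow_natCast] at h
  refine h.trans_tendsto (Real.tendsto_exp_atBot.comp ?_)
  exact Tendsto.const_mul_atTop_of_neg (by norm_num : (-(1/2):ℝ) < 0) tendsto_id

lemma tendsto_pow_gauss_atBot {b : ℝ} (hb : 0 < b) (n : ℕ) :
    Tendsto (fun x : ℝ => x ^ n * Real.exp (-b * x ^ 2)) atBot (nhds 0) := by
  have h2 : Tendsto (fun x : ℝ => ((-x) ^ n * Real.exp (-b * (-x) ^ 2))) atTop (nhds 0) := by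
    have h0 := tendsto_pow_gauss_atTop hb n
    have h1 := h0.const_mul ((-1:ℝ)^n)
    rw [mul_zero] at h1
    refine h1.congr fun x => ?_
    rw [neg_pow, neg_sq]
    ring
  have key := h2.comp tendsto_neg_atBot_atTop
  refine key.congr fun x => ?_
  simp [Function.comp]

lemma integral_deriv_gauss_zero {b : ℝ} (hb : 0 < b) (p : ℕ) :
    ∫ x : ℝ, (((2*p+1 : ℕ) : ℝ) * x ^ (2*p) - 2*b*x^(2*p+2)) * Real.exp (-b * x ^ 2) = 0 := by
  set f' : ℝ → ℝ := fun x => (((2*p+1 : ℕ) : ℝ) * x ^ (2*p) - 2*b*x^(2*p+2)) * Real.exp (-b * x ^ 2) with hf'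
  set f : ℝ → ℝ := fun x => x ^ (2*p+1) * Real.exp (-b * x ^ 2) with hf
  have hderiv : ∀ x : ℝ, HasDerivAt f (f' x) x := by
    intro x
    have h1 : HasDerivAt (fun x : ℝ => x ^ (2*p+1)) (((2*p+1:ℕ):ℝ) * x ^ (2*p)) x := by
      simpa using hasDerivAt_pow (2*p+1) x
    have h2 : HasDerivAt (fun x : ℝ => Real.exp (-b * x ^ 2)) (Real.exp (-b * x^2) * (-b * (2*x))) x := by
      have : HasDerivAt (fun x : ℝ => -b * x ^ 2) (-b * (2*x)) x := by
        simpa using ((hasDerivAt_pow 2 x).const_mul (-b))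
      exact this.exp
    have := h1.mul h2
    refine this.congr_deriv ?_
    simp only [hf']
    push_cast
    ring
  have hint : Integrable f' := by
    have h1 := (integrable_pow_gauss hb (2*p)).const_mul ((2*p+1:ℕ):ℝ)
    have h2 := (integrable_pow_gauss hb (2*p+2)).const_mul (2*b)
    have h3 := h1.sub h2
    refine h3.congr (ae_of_all _ fun x => ?_)
    simp only [Pi.sub_apply, hf']
    ring
  have htop : Tendsto f atTop (nhds 0) := tendsto_pow_gauss_atTop hb _
  have hbot : Tendsto f atBot (nhds 0) := tendsto_pow_gauss_atBot hb _
  have h1 : ∫ x in Set.Ioi (0:ℝ), f' x = 0 - f 0 :=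
    integral_Ioi_of_hasDerivAt_of_tendsto' (fun x _ => hderiv x) hint.integrableOn htop
  have h2 : ∫ x in Set.Iic (0:ℝ), f' x = f 0 - 0 :=
    integral_Iic_of_hasDerivAt_of_tendsto' (fun x _ => hderiv x) hint.integrableOn hbot
  have h3 := intervalIntegral.integral_Iic_add_Ioi (b := (0:ℝ)) (f := f') (μ := volume) hint.integrableOn hint.integrableOn
  rw [← h3, h1, h2]
  ring

lemma moment_odd (b : ℝ) (m : ℕ) (hm : Odd m) :
    ∫ x : ℝ, x ^ m * Real.exp (-b * x ^ 2) = 0 := by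
  have h := integral_neg_eq_self (fun x : ℝ => x ^ m * Real.exp (-b * x ^ 2)) volume
  have h2 : ∀ x : ℝ, (-x) ^ m * Real.exp (-b * (-x) ^ 2) = -(x ^ m * Real.exp (-b * x ^ 2)) := by
    intro x
    rw [hm.neg_pow, neg_sq]
    ring
  simp_rw [h2, integral_neg] at h
  linarith

lemma moment_even {b : ℝ} (hb : 0 < b) (p : ℕ) :
    ∫ x : ℝ, x ^ (2*p) * Real.exp (-b * x ^ 2)
      = Real.sqrt (π / b) * (Nat.factorial (2*p) : ℝ) / ((Nat.factorial p : ℝ) * (4*b)^p) := by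
  induction p with
  | zero => simpa using integral_gaussian b
  | succ p ih =>
    have key := integral_deriv_gauss_zero hb p
    have hsplit : ∫ x : ℝ, (((2*p+1 : ℕ) : ℝ) * x ^ (2*p) - 2*b*x^(2*p+2)) * Real.exp (-b * x ^ 2)
        = ((2*p+1 : ℕ) : ℝ) * (∫ x : ℝ, x ^ (2*p) * Real.exp (-b * x ^ 2))
          - 2*b * ∫ x : ℝ, x ^ (2*p+2) * Real.exp (-b * x ^ 2) := by
      rw [← integral_const_mul, ← integral_const_mul, ← integral_sub]
      · congr 1; funext x; ring
      · exact (integrable_pow_gauss hb (2*p)).const_mul _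
      · exact (integrable_pow_gauss hb (2*p+2)).const_mul _
    rw [hsplit] at key
    have h2 : (2*(p+1)) = 2*p+2 := by ring
    rw [h2, ih] at *
    have hbne : (4*b : ℝ) ≠ 0 := by positivity
    have : (∫ x : ℝ, x ^ (2*p+2) * Real.exp (-b * x ^ 2))
        = ((2*p+1 : ℕ) : ℝ) / (2*b) * (Real.sqrt (π / b) * (Nat.factorial (2*p) : ℝ) / ((Nat.factorial p : ℝ) * (4*b)^p)) := by
      field_simp at key ⊢
      linarith
    rw [this]
    have hfac1 : ((2*p+2).factorial : ℝ) = ((2*p+2) : ℝ) * ((2*p+1) : ℝ) * ((2*p).factorial : ℝ) := by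
      have e : 2*p+2 = (2*p+1) + 1 := by ring
      rw [e, Nat.factorial_succ, Nat.factorial_succ]
      push_cast; ring
    have hfac2 : ((p+1).factorial : ℝ) = ((p:ℝ)+1) * (p.factorial : ℝ) := by
      rw [Nat.factorial_succ]; push_cast; ring
    rw [hfac1, hfac2, pow_succ]
    have h1 : ((Nat.factorial p : ℝ)) ≠ 0 := Nat.cast_ne_zero.mpr p.factorial_ne_zero
    have hbne' : (b : ℝ) ≠ 0 := ne_of_gt hb
    push_cast
    field_simp
    ring

lemma gauss_poly_moment {b : ℝ} (hb : 0 < b) (μ : ℝ) (m : ℕ) :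
    ∫ z : ℝ, Real.exp (-b*(z-μ)^2) * z^m
    = Real.sqrt (π/b) * ∑ p ∈ Finset.range (m/2+1),
        (m.factorial : ℝ) / ((p.factorial : ℝ) * ((m-2*p).factorial : ℝ)) * (1/(4*b))^p * μ^(m-2*p) := by
  rw [← integral_add_right_eq_self (fun z => Real.exp (-b*(z-μ)^2) * z^m) μ]
  have e1 : ∀ x : ℝ, Real.exp (-b*(x+μ-μ)^2) * (x+μ)^m
      = ∑ j ∈ Finset.range (m+1), (x^j * Real.exp (-b*x^2)) * (μ^(m-j) * (m.choose j : ℝ)) := by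
    intro x
    rw [add_sub_cancel_right, add_pow]
    rw [Finset.mul_sum]
    refine Finset.sum_congr rfl fun j hj => ?_
    ring
  simp only [e1]
  rw [integral_finset_sum _ (fun j _ => ((integrable_pow_gauss hb j).mul_const _))]
  simp only [integral_mul_const]
  have himg : Finset.range (m+1) = (Finset.range (m/2+1)).image (fun p => 2*p) ∪
      ((Finset.range (m+1)).filter (fun j => ¬ Even j)) := by
    ext j
    simp only [Finset.mem_union, Finset.mem_image, Finset.mem_range, Finset.mem_filter]
    constructor
    · intro hj
      rcases Nat.even_or_odd j with ⟨c, hc⟩ | ho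
      · exact Or.inl ⟨c, by omega, by omega⟩
      · exact Or.inr ⟨hj, by simp [Nat.not_even_iff_odd.mpr ho]⟩
    · rintro (⟨c, hc, rfl⟩ | ⟨hj, _⟩) <;> omega
  rw [himg, Finset.sum_union, Finset.sum_image (by intro a _ b _ h; simp only at h; omega)]
  · have hodd : ∑ j ∈ (Finset.range (m+1)).filter (fun j => ¬ Even j),
        (∫ x : ℝ, x^j * Real.exp (-b*x^2)) * (μ^(m-j) * (m.choose j : ℝ)) = 0 := by
      refine Finset.sum_eq_zero fun j hj => ?_
      rw [moment_odd b j (Nat.not_even_iff_odd.mp (Finset.mem_filter.mp hj).2), zero_mul]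
    rw [hodd, add_zero, Finset.mul_sum]
    refine Finset.sum_congr rfl fun p hp => ?_
    rw [moment_even hb p]
    have h2p : 2*p ≤ m := by
      have := Finset.mem_range.mp hp; omega
    have hm : (m.factorial : ℝ) = (m.choose (2*p) : ℝ) * ((2*p).factorial : ℝ) * ((m-2*p).factorial : ℝ) := by
      exact_mod_cast (Nat.choose_mul_factorial_mul_factorial h2p).symm
    rw [hm]
    have h0 : ((m-2*p).factorial : ℝ) ≠ 0 := Nat.cast_ne_zero.mpr (Nat.factorial_ne_zero _)
    have h1 : ((p).factorial : ℝ) ≠ 0 := Nat.cast_ne_zero.mpr (Nat.factorial_ne_zero _)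
    have h2 : (4*b : ℝ) ≠ 0 := by positivity
    have h3 : ((4*b : ℝ))^p ≠ 0 := pow_ne_zero _ h2
    rw [div_pow, one_pow]
    field_simp
  · rw [Finset.disjoint_right]
    intro j hj hji
    simp only [Finset.mem_filter] at hj
    simp only [Finset.mem_image] at hji
    obtain ⟨c, _, rfl⟩ := hji
    exact hj.2 (even_two_mul c)

lemma integrable_gauss_shift_pow {b : ℝ} (hb : 0 < b) (μ : ℝ) (j : ℕ) :
    Integrable fun z : ℝ => Real.exp (-b*(z-μ)^2) * z^j := by
  have h : Integrable fun x : ℝ => Real.exp (-b*x^2) * (x+μ)^j := by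
    have e : (fun x : ℝ => Real.exp (-b*x^2) * (x+μ)^j)
        = fun x => ∑ i ∈ Finset.range (j+1), (x^i * Real.exp (-b*x^2)) * (μ^(j-i) * (j.choose i : ℝ)) := by
      funext x; rw [add_pow, Finset.mul_sum]; exact Finset.sum_congr rfl fun i _ => by ring
    rw [e]
    exact integrable_finset_sum _ (fun i _ => (integrable_pow_gauss hb i).mul_const _)
  have h2 := h.comp_sub_right μ
  refine h2.congr (ae_of_all _ fun z => ?_)
  simp only [sub_add_cancel]

lemma comb_key (n : ℕ) (α c μ : ℝ) :
    ∑ ℓ ∈ Finset.range (n/2+1), ((n.factorial : ℝ) / ((ℓ.factorial : ℝ) * ((n-2*ℓ).factorial : ℝ))) * (-1:ℝ)^ℓ * α^(n-2*ℓ) *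
      (∑ p ∈ Finset.range ((n-2*ℓ)/2+1), ((n-2*ℓ).factorial : ℝ) / ((p.factorial : ℝ) * ((n-2*ℓ-2*p).factorial : ℝ)) * c^p * μ^(n-2*ℓ-2*p))
    = ∑ q ∈ Finset.range (n/2+1), ((n.factorial : ℝ) / ((q.factorial : ℝ) * ((n-2*q).factorial : ℝ))) * (α^2*c - 1)^q * (α*μ)^(n-2*q) := by
  have hrhs : ∀ q, (α^2*c - 1)^q = ∑ p ∈ Finset.range (q+1), (α^2*c)^p * (-1:ℝ)^(q-p) * (q.choose p : ℝ) := by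
    intro q
    rw [sub_eq_add_neg, add_pow]
  simp only [hrhs, Finset.mul_sum, Finset.sum_mul]
  rw [Finset.sum_sigma' (Finset.range (n/2+1)) (fun ℓ => Finset.range ((n-2*ℓ)/2+1))
      (fun ℓ p => ((n.factorial : ℝ) / ((ℓ.factorial : ℝ) * ((n-2*ℓ).factorial : ℝ))) * (-1:ℝ)^ℓ * α^(n-2*ℓ) *
        (((n-2*ℓ).factorial : ℝ) / ((p.factorial : ℝ) * ((n-2*ℓ-2*p).factorial : ℝ)) * c^p * μ^(n-2*ℓ-2*p)))]
  rw [Finset.sum_sigma' (Finset.range (n/2+1)) (fun q => Finset.range (q+1))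
      (fun q p => ((n.factorial : ℝ) / ((q.factorial : ℝ) * ((n-2*q).factorial : ℝ))) * ((α^2*c)^p * (-1:ℝ)^(q-p) * (q.choose p : ℝ)) * (α*μ)^(n-2*q))]
  refine Finset.sum_nbij' (fun x => ⟨x.1 + x.2, x.2⟩) (fun x => ⟨x.1 - x.2, x.2⟩) ?_ ?_ ?_ ?_ ?_
  · rintro ⟨ℓ, p⟩ hx
    simp only [Finset.mem_sigma, Finset.mem_range] at hx ⊢
    omega
  · rintro ⟨q, p⟩ hx
    simp only [Finset.mem_sigma, Finset.mem_range] at hx ⊢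
    omega
  · rintro ⟨ℓ, p⟩ hx
    simp only [Finset.mem_sigma, Finset.mem_range] at hx
    have e : ℓ + p - p = ℓ := by omega
    simp [e]
  · rintro ⟨q, p⟩ hx
    simp only [Finset.mem_sigma, Finset.mem_range] at hx
    have e : q - p + p = q := by omega
    simp [e]
  · rintro ⟨ℓ, p⟩ hx
    simp only [Finset.mem_sigma, Finset.mem_range] at hx
    obtain ⟨hℓ, hp⟩ := hx
    have h1 : 2*ℓ ≤ n := by omega
    have h2 : 2*p ≤ n - 2*ℓ := by omega
    have e1 : n - 2*ℓ - 2*p = n - 2*(ℓ+p) := by omega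
    have e2 : (ℓ + p) - p = ℓ := by omega
    have e3 : n - 2*ℓ = 2*p + (n - 2*(ℓ+p)) := by omega
    have hch : (((ℓ+p).choose p : ℝ)) * (p.factorial : ℝ) * (ℓ.factorial : ℝ) = ((ℓ+p).factorial : ℝ) := by
      have := Nat.choose_mul_factorial_mul_factorial (Nat.le_add_left p ℓ)
      have e : ℓ + p - p = ℓ := by omega
      rw [e] at this
      exact_mod_cast this
    simp only [e1, e2, e3, Nat.add_sub_cancel_left]
    rw [pow_add, mul_pow, ← pow_mul]
    have nz1 : ((n-2*ℓ).factorial : ℝ) ≠ 0 := Nat.cast_ne_zero.mpr (Nat.factorial_ne_zero _)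
    have nz2 : (ℓ.factorial : ℝ) ≠ 0 := Nat.cast_ne_zero.mpr (Nat.factorial_ne_zero _)
    have nz3 : (p.factorial : ℝ) ≠ 0 := Nat.cast_ne_zero.mpr (Nat.factorial_ne_zero _)
    have nz4 : ((n-2*(ℓ+p)).factorial : ℝ) ≠ 0 := Nat.cast_ne_zero.mpr (Nat.factorial_ne_zero _)
    have nz5 : ((ℓ+p).factorial : ℝ) ≠ 0 := Nat.cast_ne_zero.mpr (Nat.factorial_ne_zero _)
    have nz6 : (((ℓ+p).choose p : ℕ) : ℝ) ≠ 0 :=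
      Nat.cast_ne_zero.mpr (Nat.choose_pos (Nat.le_add_left p ℓ)).ne'
    rw [← hch]
    field_simp
    ring

lemma exp_zpow_negn (u : ℝ) (n : ℕ) : (Real.exp u) ^ (-(n:ℤ)) = Real.exp (-((n:ℝ)*u)) := by
  rw [zpow_neg, zpow_natCast, ← Real.exp_nat_mul, ← Real.exp_neg]

theorem mehler_kernel_on_Hscaled (k : ℕ) (hk : 2 ≤ k) (σ s : ℝ) (hs : σ < s) (n : ℕ) (y : ℝ) :
    ∫ z : ℝ, mehlerK k s σ y z * Hscaled k n z σ
      = Real.exp ((s - σ) * (1 - (n : ℝ) / (2 * (k : ℝ)))) * Hscaled k n y s := by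
  have hkR : (0:ℝ) < (k:ℝ) := by exact_mod_cast (by omega : 0 < k)
  have hτ : (0:ℝ) < s - σ := sub_pos.mpr hs
  have hE1 : Real.exp (-(s-σ)) < 1 := Real.exp_lt_one_iff.mpr (by linarith)
  have h1E : 0 < 1 - Real.exp (-(s-σ)) := by linarith
  have hS : 0 < Real.sqrt (1 - Real.exp (-(s-σ))) := Real.sqrt_pos.mpr h1E
  have hSS : (Real.sqrt (1 - Real.exp (-(s-σ))))^2 = 1 - Real.exp (-(s-σ)) := Real.sq_sqrt h1E.le
  have hIσ : 0 < Ifun k σ := Real.exp_pos _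
  have h4π : 0 < Real.sqrt (4*π) := Real.sqrt_pos.mpr (by positivity)
  set L : ℝ := Ifun k σ / Real.sqrt (1 - Real.exp (-(s-σ))) with hLdef
  have hL : 0 < L := div_pos hIσ hS
  set b : ℝ := L^2/4 with hbdef
  have hb : 0 < b := by positivity
  set a : ℝ := Real.exp (-(s-σ)/(2*(k:ℝ))) with hadef
  -- pointwise integrand identity
  have key : ∀ z : ℝ, mehlerK k s σ y z * Hscaled k n z σ
      = ∑ ℓ ∈ Finset.range (n/2+1),
          (Real.exp (s-σ) * (L / Real.sqrt (4*π)) * (Ifun k σ)^(-(n:ℤ)) *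
            ((n.factorial : ℝ)/((ℓ.factorial : ℝ)*((n-2*ℓ).factorial : ℝ)) * (-1:ℝ)^ℓ * (Ifun k σ)^(n-2*ℓ)))
          * (Real.exp (-b*(z - a*y)^2) * z^(n-2*ℓ)) := by
    intro z
    rw [mehlerK, Hscaled, hPoly]
    rw [← hLdef, ← hadef]
    have hexp : Real.exp (-(L ^ 2 * (a * y - z) ^ 2) / 4) = Real.exp (-b*(z - a*y)^2) := by
      congr 1
      rw [hbdef]
      ring
    rw [hexp]
    simp only [Finset.mul_sum]
    refine Finset.sum_congr rfl fun ℓ _ => ?_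
    rw [mul_pow]
    ring
  simp only [key]
  rw [integral_finset_sum _ (fun ℓ _ => ((integrable_gauss_shift_pow hb (a*y) (n-2*ℓ)).const_mul _))]
  simp only [integral_const_mul]
  have hmom : ∀ ℓ : ℕ, (∫ z : ℝ, Real.exp (-b*(z - a*y)^2) * z^(n-2*ℓ))
      = Real.sqrt (π/b) * ∑ p ∈ Finset.range ((n-2*ℓ)/2+1),
        ((n-2*ℓ).factorial : ℝ) / ((p.factorial : ℝ) * ((n-2*ℓ-2*p).factorial : ℝ)) * (1/(4*b))^p * (a*y)^(n-2*ℓ-2*p) :=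
    fun ℓ => gauss_poly_moment hb (a*y) (n-2*ℓ)
  simp only [hmom]
  have hLne : L ≠ 0 := ne_of_gt hL
  have h4πne : Real.sqrt (4*π) ≠ 0 := ne_of_gt h4π
  have hsq : Real.sqrt (π/b) = Real.sqrt (4*π) / L := by
    rw [hbdef]
    rw [show π / (L^2/4) = (4*π)/L^2 by field_simp]
    rw [Real.sqrt_div (by positivity : (0:ℝ) ≤ 4*π), Real.sqrt_sq hL.le]
  have lhs_eq : (∑ ℓ ∈ Finset.range (n/2+1),
        (Real.exp (s-σ) * (L / Real.sqrt (4*π)) * (Ifun k σ)^(-(n:ℤ)) *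
          ((n.factorial : ℝ)/((ℓ.factorial : ℝ)*((n-2*ℓ).factorial : ℝ)) * (-1:ℝ)^ℓ * (Ifun k σ)^(n-2*ℓ)))
        * (Real.sqrt (π/b) * ∑ p ∈ Finset.range ((n-2*ℓ)/2+1),
            ((n-2*ℓ).factorial : ℝ) / ((p.factorial : ℝ) * ((n-2*ℓ-2*p).factorial : ℝ)) * (1/(4*b))^p * (a*y)^(n-2*ℓ-2*p)))
      = Real.exp (s-σ) * (Ifun k σ)^(-(n:ℤ)) *
        ∑ ℓ ∈ Finset.range (n/2+1),
          ((n.factorial : ℝ) / ((ℓ.factorial : ℝ) * ((n-2*ℓ).factorial : ℝ))) * (-1:ℝ)^ℓ * (Ifun k σ)^(n-2*ℓ) *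
            (∑ p ∈ Finset.range ((n-2*ℓ)/2+1),
              ((n-2*ℓ).factorial : ℝ) / ((p.factorial : ℝ) * ((n-2*ℓ-2*p).factorial : ℝ)) * (1/(4*b))^p * (a*y)^(n-2*ℓ-2*p)) := by
    rw [Finset.mul_sum]
    refine Finset.sum_congr rfl fun ℓ _ => ?_
    rw [hsq]
    field_simp
  rw [lhs_eq, comb_key n (Ifun k σ) (1/(4*b)) (a*y)]
  have hIc : Ifun k σ ^ 2 * (1/(4*b)) - 1 = -(Real.exp (-(s-σ))) := by
    rw [hbdef, hLdef, div_pow, hSS]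
    have h1 : (1 - Real.exp (-(s-σ))) ≠ 0 := ne_of_gt h1E
    have h2 : (Ifun k σ) ≠ 0 := ne_of_gt hIσ
    field_simp
    ring
  rw [hIc, Hscaled, hPoly]
  simp only [Finset.mul_sum]
  refine Finset.sum_congr rfl fun q hq => ?_
  have h2q : 2*q ≤ n := by have := Finset.mem_range.mp hq; omega
  have hcast : ((n - 2*q : ℕ) : ℝ) = (n:ℝ) - 2*(q:ℝ) := by
    push_cast [h2q]
    ring
  have hE2 : Real.exp (s-σ) * (Ifun k σ)^(-(n:ℤ)) * (Real.exp (-(s-σ)))^q * ((Ifun k σ) * a)^(n-2*q)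
      = Real.exp ((s-σ)*(1-(n:ℝ)/(2*(k:ℝ)))) * (Ifun k s)^(-(n:ℤ)) * (Ifun k s)^(n-2*q) := by
    rw [Ifun, Ifun, hadef, exp_zpow_negn, exp_zpow_negn]
    simp only [← Real.exp_add, ← Real.exp_nat_mul]
    rw [Real.exp_eq_exp, hcast]
    have hkne : (k:ℝ) ≠ 0 := ne_of_gt hkR
    field_simp
    ring
  linear_combination ((n.factorial : ℝ)/((q.factorial : ℝ)*((n-2*q).factorial : ℝ)) * (-1:ℝ)^q * y^(n-2*q)) * hE2
end
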